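/- arXiv:2412.13819 — 2 statements merged into one kernel-verified Lean document; each statement's English description precedes it below -/
import Mathlib

section
/- Let M be a nonzero real k×l matrix and let α ∈ ℝ^k, β ∈ ℝ^l be vectors with αᵀMβ = 0. Then there exist vectors e_α ∈ ℝ^k and e_β ∈ ℝ^l such that for every y > 0, (α + y e_α)ᵀ M (β + y e_β) < 0. -/
open Matrix

lemma expand_aux {k l : ℕ} (M : Matrix (Fin k) (Fin l) ℝ)
    (α eα : Fin k → ℝ) (β eβ : Fin l → ℝ) (y : ℝ) :
    (α + y • eα) ⬝ᵥ M.mulVec (β + y • eβ) =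
      α ⬝ᵥ M.mulVec β + y * (α ⬝ᵥ M.mulVec eβ) + y * (eα ⬝ᵥ M.mulVec β)
        + y ^ 2 * (eα ⬝ᵥ M.mulVec eβ) := by
  simp [Matrix.mulVec_add, Matrix.mulVec_smul, add_dotProduct,
    dotProduct_add, smul_dotProduct, dotProduct_smul, smul_eq_mul]
  ring

lemma dp_self_pos {n : ℕ} {v : Fin n → ℝ} (hv : v ≠ 0) : 0 < v ⬝ᵥ v := by
  have h0 : 0 ≤ v ⬝ᵥ v := Finset.sum_nonneg fun i _ => mul_self_nonneg (v i)
  rcases h0.lt_or_eq with h | h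
  · exact h
  · exact absurd ((dotProduct_self_eq_zero).mp h.symm) hv

/-- Perturbation lemma: for a nonzero real matrix `M` and vectors `α`, `β` with `αᵀMβ = 0`,
there are perturbation directions making the bilinear form strictly negative for all `y > 0`. -/
theorem bilinear_perturbation_neg
    (k l : ℕ) (M : Matrix (Fin k) (Fin l) ℝ) (hM : M ≠ 0)
    (α : Fin k → ℝ) (β : Fin l → ℝ) (h : α ⬝ᵥ M.mulVec β = 0) :
    ∃ eα : Fin k → ℝ, ∃ eβ : Fin l → ℝ,
      ∀ y : ℝ, 0 < y → (α + y • eα) ⬝ᵥ M.mulVec (β + y • eβ) < 0 := by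
  by_cases hv : Matrix.vecMul α M = 0
  · by_cases hw : M.mulVec β = 0
    · -- case 3: pick entries
      have : ∃ i j, M i j ≠ 0 := by
        by_contra hc
        push_neg at hc
        exact hM (by ext i j; simpa using hc i j)
      obtain ⟨i, j, hij⟩ := this
      refine ⟨Pi.single i 1, Pi.single j (-(M i j)), fun y hy => ?_⟩
      rw [expand_aux, h]
      have h1 : α ⬝ᵥ M.mulVec (Pi.single j (-(M i j))) = 0 := by
        rw [Matrix.dotProduct_mulVec, hv]; simp
      have h2 : (Pi.single i 1 : Fin k → ℝ) ⬝ᵥ M.mulVec β = 0 := by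
        rw [hw]; simp
      have h3 : (Pi.single i 1 : Fin k → ℝ) ⬝ᵥ M.mulVec (Pi.single j (-(M i j)))
          = -(M i j * M i j) := by
        simp [single_dotProduct, Matrix.mulVec_single, mul_comm]
      rw [h1, h2, h3]
      have : 0 < M i j * M i j := mul_self_pos.mpr hij
      nlinarith [pow_pos hy 2]
    · -- case 2
      refine ⟨-(M.mulVec β), 0, fun y hy => ?_⟩
      rw [expand_aux, h]
      have hpos := dp_self_pos hw
      simp only [Matrix.mulVec_zero, dotProduct_zero, neg_dotProduct]
      nlinarith
  · -- case 1
    refine ⟨0, -(Matrix.vecMul α M), fun y hy => ?_⟩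
    rw [expand_aux, h]
    have h1 : α ⬝ᵥ M.mulVec (-(Matrix.vecMul α M)) = -(Matrix.vecMul α M ⬝ᵥ Matrix.vecMul α M) := by
      rw [Matrix.dotProduct_mulVec]; simp
    have hpos := dp_self_pos hv
    simp only [zero_dotProduct, h1]
    nlinarith
end

section
/- Let β be a real m×n matrix with all entries nonzero, and let ã ∈ ℝ^m, b̃ ∈ ℝ^n be vectors with ãᵀ β b̃ = 0 and with some coordinate product ã_i b̃_j ≠ 0. Then β ã b̃-bilinearly admits a strictly negative perturbation: there exist e_a ∈ ℝ^m, e_b ∈ ℝ^n such that for all y > 0, (ã + y e_a)ᵀ β (b̃ + y e_b) < 0. -/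
open Matrix

/-- Core of Corollary 4: if all entries of `β` are nonzero, `a0ᵀβb0 = 0`, and some product
`a0 i * b0 j ≠ 0`, then the bilinear form admits a strictly negative perturbation. -/
theorem bilinear_perturbation_neg_of_nonzero_entries
    (m n : ℕ) (β : Matrix (Fin m) (Fin n) ℝ) (hβ : ∀ x y, β x y ≠ 0)
    (a0 : Fin m → ℝ) (b0 : Fin n → ℝ)
    (h0 : a0 ⬝ᵥ β.mulVec b0 = 0)
    (i : Fin m) (j : Fin n) (hij : a0 i * b0 j ≠ 0) :
    ∃ ea : Fin m → ℝ, ∃ eb : Fin n → ℝ,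
      ∀ y : ℝ, 0 < y → (a0 + y • ea) ⬝ᵥ β.mulVec (b0 + y • eb) < 0 := by
  set A : ℝ := β.mulVec b0 i with hA
  set B : ℝ := a0 ⬝ᵥ (fun x => β x j) with hB
  set D : ℝ := B - β i j * A with hD
  set s : ℝ := if D = 0 then 1 else -D with hs
  set t : ℝ := -s * β i j with ht
  have hsne : s ≠ 0 := by
    by_cases h : D = 0 <;> simp [hs, h]
  refine ⟨Pi.single i t, Pi.single j s, fun y hy => ?_⟩
  have expand : (a0 + y • (Pi.single i t : Fin m → ℝ)) ⬝ᵥ β.mulVec (b0 + y • (Pi.single j s : Fin n → ℝ))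
      = y * (s * D) + y ^ 2 * (t * s * β i j) := by
    simp only [Matrix.mulVec_add, Matrix.mulVec_smul, dotProduct_add, add_dotProduct,
      dotProduct_smul, smul_dotProduct, Matrix.mulVec_single, dotProduct_single,
      Pi.single_apply, smul_eq_mul, h0]
    have h1 : (a0 ⬝ᵥ fun x => β x j * s) = B * s := by
      simp only [hB, dotProduct]
      rw [Finset.sum_mul]
      exact Finset.sum_congr rfl (fun x _ => by ring)
    have h2 : (Pi.single i t ⬝ᵥ β.mulVec b0) = t * A := by
      rw [single_dotProduct, hA]
    have h3 : (Pi.single i t ⬝ᵥ fun x => β x j * s) = t * (β i j * s) := by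
      rw [single_dotProduct]
    have h1' : a0 ⬝ᵥ β.col j = B := rfl
    have h3' : Pi.single i t ⬝ᵥ β.col j = t * β i j := by rw [single_dotProduct]; rfl
    rw [op_smul_eq_mul, h1', h2, h3', ht, hD]
    ring
  rw [expand]
  have hquad : t * s * β i j < 0 := by
    rw [ht]
    have : -s * β i j * s * β i j = -(s * β i j) ^ 2 := by ring
    rw [this]
    have hne : s * β i j ≠ 0 := mul_ne_zero hsne (hβ i j)
    have hpos : 0 < (s * β i j) ^ 2 := by positivity
    linarith
  have hlin : s * D ≤ 0 := by
    by_cases h : D = 0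
    · simp [h]
    · simp only [hs, if_neg h]
      nlinarith [sq_nonneg D]
  nlinarith [sq_nonneg y, mul_pos hy hy]
end
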